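/- Let ψ be the Lévy–Khintchine characteristic exponent associated with drift μ ∈ ℝ, volatility σ ≥ 0, and jump measure ν, and assume in addition that ∫_{|x|>1} |x|^ε ν(dx) < ∞ for some ε ∈ (0, 1). Then for every q ∈ (0, 1) the function h(ω) = (1 − q)/(1 − q·e^{ψ(ω)}) satisfies a global Hölder condition on ℝ: there exist a constant C > 0 and an exponent γ ∈ (0, 1] such that |h(ω₁) − h(ω₂)| ≤ C|ω₁ − ω₂|^γ for all ω₁, ω₂ ∈ ℝ. -/

import Mathlib

open MeasureTheory Complex Real

/-- The Lévy–Khintchine characteristic exponent with drift `μ`, volatility `σ`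
and jump measure `ν`. -/
noncomputable def levyExponent (μdrift σ : ℝ) (ν : Measure ℝ) (ω : ℝ) : ℂ :=
  Complex.I * (μdrift : ℂ) * (ω : ℂ) - (1 / 2 : ℂ) * (σ : ℂ) ^ 2 * (ω : ℂ) ^ 2 +
    ∫ x : ℝ, (Complex.exp (Complex.I * ω * x) - 1 -
      (Set.Icc (-1 : ℝ) 1).indicator (fun t : ℝ => Complex.I * (ω : ℂ) * (t : ℂ)) x) ∂ν


lemma exp_norm_sub_le (a b : ℂ) :
    ‖Complex.exp a - Complex.exp b‖ ≤ ‖a - b‖ * max (Real.exp a.re) (Real.exp b.re) := by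
  set f : ℝ → ℂ := fun t => Complex.exp (b + t • (a - b)) with hf
  have hderiv : ∀ t ∈ Set.Icc (0:ℝ) 1,
      HasDerivWithinAt f (Complex.exp (b + t • (a - b)) * (a - b)) (Set.Icc 0 1) t := by
    intro t ht
    have h1 : HasDerivAt (fun t : ℝ => b + t • (a - b)) (a - b) t := by
      simpa using ((hasDerivAt_id t).smul_const (a - b)).const_add b
    exact (h1.cexp).hasDerivWithinAt
  have hbound : ∀ t ∈ Set.Icc (0:ℝ) 1,
      ‖Complex.exp (b + t • (a - b)) * (a - b)‖ ≤ max (Real.exp a.re) (Real.exp b.re) * ‖a - b‖ := by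
    intro t ht
    rw [norm_mul]
    gcongr
    rw [Complex.norm_exp]
    have hre : (b + t • (a - b)).re = b.re + t * (a.re - b.re) := by
      simp [Complex.add_re, Complex.smul_re]
    rw [hre]
    rcases le_total a.re b.re with h | h
    · refine (Real.exp_le_exp.2 ?_).trans (le_max_right _ _)
      nlinarith [ht.1, ht.2]
    · refine (Real.exp_le_exp.2 ?_).trans (le_max_left _ _)
      nlinarith [ht.1, ht.2]
  have := Convex.norm_image_sub_le_of_norm_hasDerivWithin_le hderiv hbound
    (convex_Icc 0 1) (Set.left_mem_Icc.2 zero_le_one) (Set.right_mem_Icc.2 zero_le_one)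
  have h0 : f 0 = Complex.exp b := by simp [hf]
  have h1 : f 1 = Complex.exp a := by simp [hf]
  simpa [h0, h1, mul_comm] using this

lemma norm_exp_I_mul_sub_one_le (θ : ℝ) : ‖Complex.exp (Complex.I * θ) - 1‖ ≤ |θ| := by
  have := exp_norm_sub_le (Complex.I * θ) 0
  simpa [Complex.norm_exp] using this

lemma norm_exp_I_mul_sub_one_sub_le (θ : ℝ) :
    ‖Complex.exp (Complex.I * θ) - 1 - Complex.I * θ‖ ≤ θ ^ 2 := by
  set f : ℝ → ℂ := fun t => Complex.exp (Complex.I * (t * θ)) - Complex.I * (t * θ) with hf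
  have hderiv : ∀ t ∈ Set.Icc (0:ℝ) 1,
      HasDerivWithinAt f
        (Complex.exp (Complex.I * (t * θ)) * (Complex.I * θ) - Complex.I * θ) (Set.Icc 0 1) t := by
    intro t ht
    have h1 : HasDerivAt (fun t : ℝ => Complex.I * ((t:ℂ) * θ)) (Complex.I * θ) t := by
      have := ((Complex.ofRealCLM.hasDerivAt (x := t)).mul_const (θ:ℂ)).const_mul Complex.I
      simpa using this
    exact ((h1.cexp).sub h1).hasDerivWithinAt
  have hbound : ∀ t ∈ Set.Icc (0:ℝ) 1,
      ‖Complex.exp (Complex.I * (t * θ)) * (Complex.I * θ) - Complex.I * θ‖ ≤ θ ^ 2 := by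
    intro t ht
    have : Complex.exp (Complex.I * (t * θ)) * (Complex.I * θ) - Complex.I * θ
        = (Complex.exp (Complex.I * ((t * θ : ℝ) : ℂ)) - 1) * (Complex.I * θ) := by
      push_cast; ring
    rw [this, norm_mul]
    have h2 := norm_exp_I_mul_sub_one_le (t * θ)
    have h3 : ‖Complex.I * (θ:ℂ)‖ = |θ| := by
      simp [norm_mul]
    rw [h3]
    calc ‖Complex.exp (Complex.I * ((t * θ : ℝ):ℂ)) - 1‖ * |θ| ≤ |t * θ| * |θ| := by gcongr
      _ ≤ θ ^ 2 := by
          rw [abs_mul]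
          rcases ht with ⟨h0, h1⟩
          nlinarith [abs_nonneg θ, _root_.sq_abs θ, _root_.abs_of_nonneg h0]
  have := Convex.norm_image_sub_le_of_norm_hasDerivWithin_le hderiv hbound
    (convex_Icc 0 1) (Set.left_mem_Icc.2 zero_le_one) (Set.right_mem_Icc.2 zero_le_one)
  have h0 : f 0 = 1 := by simp [hf]
  have h1 : f 1 = Complex.exp (Complex.I * θ) - Complex.I * θ := by simp [hf]
  have h2 : ‖f 1 - f 0‖ ≤ θ ^ 2 := by simpa using this
  rw [h0, h1] at h2
  rw [show Complex.exp (Complex.I * θ) - Complex.I * θ - 1 = Complex.exp (Complex.I * θ) - 1 - Complex.I * θ by ring] at h2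
  exact h2

lemma one_sub_cos_le_sq (θ : ℝ) : 1 - Real.cos θ ≤ θ ^ 2 := by
  have h := norm_exp_I_mul_sub_one_sub_le θ
  have hre : (Complex.exp (Complex.I * θ) - 1 - Complex.I * θ).re = Real.cos θ - 1 := by
    simp [Complex.exp_re, Complex.sub_re, Complex.mul_re]
  have := (Complex.abs_re_le_norm (Complex.exp (Complex.I * θ) - 1 - Complex.I * θ))
  rw [hre] at this
  have h2 : |Real.cos θ - 1| ≤ θ ^ 2 := le_trans this h
  cases abs_le.1 h2 with
  | intro h3 h4 => linarith

lemma sq_norm_exp_I_mul_sub_one (θ : ℝ) :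
    ‖Complex.exp (Complex.I * θ) - 1‖ ^ 2 = 2 * (1 - Real.cos θ) := by
  rw [Complex.sq_norm, Complex.normSq_apply]
  simp only [Complex.sub_re, Complex.sub_im, Complex.one_re, Complex.one_im, Complex.exp_re,
    Complex.exp_im, Complex.mul_re, Complex.mul_im, Complex.I_re, Complex.I_im,
    Complex.ofReal_re, Complex.ofReal_im]
  have h1 := Real.sin_sq_add_cos_sq θ
  norm_num [Real.exp_zero]
  nlinarith [h1]

lemma norm_exp_I_mul_sub_one_le_two (θ : ℝ) : ‖Complex.exp (Complex.I * θ) - 1‖ ≤ 2 := by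
  calc ‖Complex.exp (Complex.I * θ) - 1‖ ≤ ‖Complex.exp (Complex.I * θ)‖ + ‖(1:ℂ)‖ :=
        norm_sub_le _ _
    _ ≤ 2 := by
        rw [Complex.norm_exp]
        simp [Complex.mul_re]
        norm_num

lemma exp_I_mul_sub_exp_I_mul (a b x : ℝ) :
    ‖Complex.exp (Complex.I * a * x) - Complex.exp (Complex.I * b * x)‖
      = ‖Complex.exp (Complex.I * ((a - b) * x)) - 1‖ := by
  have : Complex.exp (Complex.I * a * x) - Complex.exp (Complex.I * b * x)
      = Complex.exp (Complex.I * b * x) * (Complex.exp (Complex.I * ((a - b) * x : ℝ)) - 1) := by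
    rw [mul_sub, ← Complex.exp_add]
    push_cast
    ring_nf
  rw [this, norm_mul, Complex.norm_exp]
  have : (Complex.I * b * x).re = 0 := by simp [Complex.mul_re]
  rw [this, Real.exp_zero, one_mul]
  norm_num

lemma min_two_le_rpow {t ε : ℝ} (ht : 0 ≤ t) (hε0 : 0 < ε) (hε1 : ε ≤ 1) :
    min 2 t ≤ 2 * t ^ ε := by
  rcases le_or_gt 1 t with h | h
  · have : (1:ℝ) ≤ t ^ ε := Real.one_le_rpow h hε0.le
    calc min 2 t ≤ 2 := min_le_left _ _
      _ ≤ 2 * t ^ ε := by linarith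
  · rcases eq_or_lt_of_le ht with h0 | h0
    · rw [← h0, Real.zero_rpow hε0.ne']
      simp
    · have h1 : t ^ (1:ℝ) ≤ t ^ ε := Real.rpow_le_rpow_of_exponent_ge h0 h.le hε1
      rw [Real.rpow_one] at h1
      have : 0 ≤ t ^ ε := Real.rpow_nonneg ht ε
      calc min 2 t ≤ t := min_le_right _ _
        _ ≤ 2 * t ^ ε := by linarith

lemma self_mul_exp_neg_le_one {s : ℝ} (hs : 0 ≤ s) : s * Real.exp (-s) ≤ 1 := by
  rw [Real.exp_neg]
  rw [mul_inv_le_iff₀ (Real.exp_pos s), one_mul]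
  calc s ≤ s + 1 := by linarith
    _ ≤ Real.exp s := Real.add_one_le_exp s

lemma t_mul_exp_neg_sq_le_one {t : ℝ} (ht : 0 ≤ t) : t * Real.exp (-(t ^ 2 / 2)) ≤ 1 := by
  rw [Real.exp_neg, mul_inv_le_iff₀ (Real.exp_pos _), one_mul]
  calc t ≤ t ^ 2 / 2 + 1 := by nlinarith
    _ ≤ Real.exp (t ^ 2 / 2) := Real.add_one_le_exp _

lemma gauss_decay {σ w : ℝ} (hσ : 0 ≤ σ) (hw : 0 ≤ w) :
    σ ^ 2 * w * Real.exp (-(σ ^ 2 * w ^ 2 / 2)) ≤ σ := by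
  have h := t_mul_exp_neg_sq_le_one (mul_nonneg hσ hw)
  have e1 : (σ * w) ^ 2 = σ ^ 2 * w ^ 2 := by ring
  rw [e1] at h
  calc σ ^ 2 * w * Real.exp (-(σ ^ 2 * w ^ 2 / 2))
      = σ * (σ * w * Real.exp (-(σ ^ 2 * w ^ 2 / 2))) := by ring
    _ ≤ σ * 1 := by
        apply mul_le_mul_of_nonneg_left h hσ
    _ = σ := mul_one σ

namespace LevyHolderAux

def S : Set ℝ := Set.Icc (-1 : ℝ) 1

lemma measurableSet_S : MeasurableSet S := measurableSet_Icc

noncomputable def Js (ν : Measure ℝ) (ω : ℝ) : ℂ :=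
  ∫ x in S, (Complex.exp (Complex.I * ω * x) - 1 - Complex.I * ω * x) ∂ν

noncomputable def Jb (ν : Measure ℝ) (ω : ℝ) : ℂ :=
  ∫ x in Sᶜ, (Complex.exp (Complex.I * ω * x) - 1) ∂ν

noncomputable def sfun (ν : Measure ℝ) (ω : ℝ) : ℝ :=
  ∫ x in S, (1 - Real.cos (ω * x)) ∂ν

noncomputable def c2 (ν : Measure ℝ) : ℝ := ∫ x in S, x ^ 2 ∂ν

variable {ν : Measure ℝ}

lemma integrable_min_sq (hν : ∫⁻ x : ℝ, ENNReal.ofReal (min 1 (x ^ 2)) ∂ν < ⊤) :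
    Integrable (fun x : ℝ => min 1 (x ^ 2)) ν := by
  refine ⟨(continuous_const.min (continuous_pow 2)).aestronglyMeasurable, ?_⟩
  rw [hasFiniteIntegral_iff_ofReal (ae_of_all _ fun x => le_min zero_le_one (sq_nonneg x))]
  exact hν

lemma integrable_sq (hg2 : Integrable (fun x : ℝ => min 1 (x ^ 2)) ν) :
    Integrable (fun x : ℝ => x ^ 2) (ν.restrict S) := by
  refine Integrable.mono' (hg2.restrict (s := S)) (continuous_pow 2).aestronglyMeasurable ?_
  refine (ae_restrict_iff' measurableSet_S).2 (ae_of_all _ fun x hx => ?_)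
  have hx2 : x ^ 2 ≤ 1 := by
    rcases hx with ⟨h1, h2⟩
    nlinarith
  rw [Real.norm_eq_abs, _root_.abs_of_nonneg (sq_nonneg x), min_eq_right hx2]

lemma c2_nonneg : 0 ≤ c2 ν := integral_nonneg fun x => sq_nonneg x

lemma sfun_nonneg (ω : ℝ) : 0 ≤ sfun ν ω :=
  integral_nonneg fun x => by simp [Real.cos_le_one]

lemma integrable_one_sub_cos (hg2 : Integrable (fun x : ℝ => min 1 (x ^ 2)) ν) (ω : ℝ) :
    Integrable (fun x : ℝ => 1 - Real.cos (ω * x)) (ν.restrict S) := by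
  refine Integrable.mono' ((integrable_sq hg2).const_mul (ω ^ 2))
    ((continuous_const.sub (Real.continuous_cos.comp
      (continuous_const.mul continuous_id))).aestronglyMeasurable) (ae_of_all _ fun x => ?_)
  have h1 : 0 ≤ 1 - Real.cos (ω * x) := by simp [Real.cos_le_one]
  have h2 := one_sub_cos_le_sq (ω * x)
  rw [Real.norm_eq_abs, _root_.abs_of_nonneg h1]
  calc 1 - Real.cos (ω * x) ≤ (ω * x) ^ 2 := h2
    _ = ω ^ 2 * x ^ 2 := by ring

lemma integrable_Js_integrand (hg2 : Integrable (fun x : ℝ => min 1 (x ^ 2)) ν) (ω : ℝ) :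
    Integrable (fun x : ℝ => Complex.exp (Complex.I * ω * x) - 1 - Complex.I * ω * x)
      (ν.restrict S) := by
  refine Integrable.mono' ((integrable_sq hg2).const_mul (ω ^ 2)) ?_ (ae_of_all _ fun x => ?_)
  · apply Continuous.aestronglyMeasurable
    continuity
  · have h0 : Complex.I * (ω : ℂ) * (x : ℂ) = Complex.I * ((ω * x : ℝ) : ℂ) := by
      push_cast; ring
    rw [h0]
    calc ‖Complex.exp (Complex.I * ((ω * x : ℝ) : ℂ)) - 1 - Complex.I * ((ω * x : ℝ) : ℂ)‖
        ≤ (ω * x) ^ 2 := norm_exp_I_mul_sub_one_sub_le (ω * x)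
      _ = ω ^ 2 * x ^ 2 := by ring

lemma measure_compl_lt_top (hν : ∫⁻ x : ℝ, ENNReal.ofReal (min 1 (x ^ 2)) ∂ν < ⊤) :
    ν Sᶜ < ⊤ := by
  have h1 : ν Sᶜ = ∫⁻ x in Sᶜ, 1 ∂ν := (setLIntegral_one _).symm
  rw [h1]
  refine lt_of_le_of_lt ?_ hν
  have h2 : ∫⁻ x in Sᶜ, (1 : ENNReal) ∂ν ≤ ∫⁻ x in Sᶜ, ENNReal.ofReal (min 1 (x ^ 2)) ∂ν := by
    refine setLIntegral_mono' measurableSet_S.compl fun x hx => ?_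
    have hx1 : 1 < |x| := by
      simp only [S, Set.mem_compl_iff, Set.mem_Icc, not_and_or, not_le] at hx
      rcases hx with h | h
      · rw [abs_of_neg (by linarith)]; linarith
      · rw [abs_of_pos (by linarith)]; linarith
    have : min 1 (x ^ 2) = 1 := min_eq_left (by nlinarith [_root_.sq_abs x])
    rw [this]
    simp
  exact h2.trans (lintegral_mono' Measure.restrict_le_self le_rfl)

lemma integrable_Jb_integrand (hν : ∫⁻ x : ℝ, ENNReal.ofReal (min 1 (x ^ 2)) ∂ν < ⊤) (ω : ℝ) :
    Integrable (fun x : ℝ => Complex.exp (Complex.I * ω * x) - 1) (ν.restrict Sᶜ) := by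
  haveI : IsFiniteMeasure (ν.restrict Sᶜ) := by
    constructor
    rw [Measure.restrict_apply_univ]
    exact measure_compl_lt_top hν
  refine Integrable.mono' (integrable_const (2 : ℝ)) ?_ (ae_of_all _ fun x => ?_)
  · apply Continuous.aestronglyMeasurable
    continuity
  · have h0 : Complex.I * (ω : ℂ) * (x : ℂ) = Complex.I * ((ω * x : ℝ) : ℂ) := by
      push_cast; ring
    rw [h0]
    exact norm_exp_I_mul_sub_one_le_two (ω * x)

end LevyHolderAux

namespace LevyHolderAux
variable {ν : Measure ℝ}

lemma integrable_full (hν : ∫⁻ x : ℝ, ENNReal.ofReal (min 1 (x ^ 2)) ∂ν < ⊤) (ω : ℝ) :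
    Integrable (fun x : ℝ => Complex.exp (Complex.I * ω * x) - 1 -
      (Set.Icc (-1 : ℝ) 1).indicator (fun t : ℝ => Complex.I * (ω : ℂ) * (t : ℂ)) x) ν := by
  have hg2 := integrable_min_sq hν
  refine Integrable.mono' (hg2.const_mul (2 + ω ^ 2)) ?_ (ae_of_all _ fun x => ?_)
  · refine AEStronglyMeasurable.sub ?_ ?_
    · apply Continuous.aestronglyMeasurable; continuity
    · refine (StronglyMeasurable.indicator ?_ measurableSet_Icc).aestronglyMeasurable
      apply Continuous.stronglyMeasurable; continuity
  · have h0 : Complex.I * (ω : ℂ) * (x : ℂ) = Complex.I * ((ω * x : ℝ) : ℂ) := by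
      push_cast; ring
    have hmin : 0 ≤ min 1 (x ^ 2) := le_min zero_le_one (sq_nonneg x)
    by_cases hx : x ∈ Set.Icc (-1 : ℝ) 1
    · rw [Set.indicator_of_mem hx]
      have hx2 : x ^ 2 ≤ 1 := by rcases hx with ⟨h1, h2⟩; nlinarith
      have hminx : min 1 (x ^ 2) = x ^ 2 := min_eq_right hx2
      rw [h0]
      calc ‖Complex.exp (Complex.I * ((ω * x : ℝ) : ℂ)) - 1 - Complex.I * ((ω * x : ℝ) : ℂ)‖
          ≤ (ω * x) ^ 2 := norm_exp_I_mul_sub_one_sub_le (ω * x)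
        _ = ω ^ 2 * x ^ 2 := by ring
        _ ≤ (2 + ω ^ 2) * min 1 (x ^ 2) := by rw [hminx]; nlinarith [sq_nonneg x, sq_nonneg ω]
    · rw [Set.indicator_of_notMem hx, sub_zero, h0]
      have hx2 : 1 ≤ x ^ 2 := by
        simp only [Set.mem_Icc, not_and_or, not_le] at hx
        rcases hx with h | h <;> nlinarith
      have hminx : min 1 (x ^ 2) = 1 := min_eq_left hx2
      calc ‖Complex.exp (Complex.I * ((ω * x : ℝ) : ℂ)) - 1‖ ≤ 2 :=
            norm_exp_I_mul_sub_one_le_two (ω * x)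
        _ ≤ (2 + ω ^ 2) * min 1 (x ^ 2) := by rw [hminx]; nlinarith [sq_nonneg ω]

lemma levy_split (μdrift σ : ℝ) (hν : ∫⁻ x : ℝ, ENNReal.ofReal (min 1 (x ^ 2)) ∂ν < ⊤) (ω : ℝ) :
    levyExponent μdrift σ ν ω =
      (Complex.I * μdrift * ω - (1 / 2 : ℂ) * (σ : ℂ) ^ 2 * (ω : ℂ) ^ 2) + Js ν ω + Jb ν ω := by
  rw [levyExponent, ← integral_add_compl measurableSet_S (integrable_full hν ω)]
  have h1 : ∫ x in S, (Complex.exp (Complex.I * ω * x) - 1 -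
      (Set.Icc (-1 : ℝ) 1).indicator (fun t : ℝ => Complex.I * (ω : ℂ) * (t : ℂ)) x) ∂ν
        = Js ν ω := by
    refine setIntegral_congr_fun measurableSet_S fun x hx => ?_
    rw [Set.indicator_of_mem (show x ∈ Set.Icc (-1:ℝ) 1 from hx)]
  have h2 : ∫ x in Sᶜ, (Complex.exp (Complex.I * ω * x) - 1 -
      (Set.Icc (-1 : ℝ) 1).indicator (fun t : ℝ => Complex.I * (ω : ℂ) * (t : ℂ)) x) ∂ν
        = Jb ν ω := by
    refine setIntegral_congr_fun measurableSet_S.compl fun x hx => ?_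
    rw [Set.indicator_of_notMem (show x ∉ Set.Icc (-1:ℝ) 1 from hx), sub_zero]
  rw [h1, h2]
  ring

lemma Js_re (hν : ∫⁻ x : ℝ, ENNReal.ofReal (min 1 (x ^ 2)) ∂ν < ⊤) (ω : ℝ) :
    (Js ν ω).re = -sfun ν ω := by
  have hg2 := integrable_min_sq hν
  have h := ContinuousLinearMap.integral_comp_comm Complex.reCLM
    (integrable_Js_integrand hg2 ω)
  simp only [Complex.reCLM_apply] at h
  rw [Js, ← h, sfun, ← integral_neg]
  refine integral_congr_ae (ae_of_all _ fun x => ?_)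
  simp [Complex.exp_re, Complex.sub_re, Complex.mul_re, Complex.mul_im]

lemma Jb_re_nonpos (hν : ∫⁻ x : ℝ, ENNReal.ofReal (min 1 (x ^ 2)) ∂ν < ⊤) (ω : ℝ) :
    (Jb ν ω).re ≤ 0 := by
  have h := ContinuousLinearMap.integral_comp_comm Complex.reCLM
    (integrable_Jb_integrand hν ω)
  simp only [Complex.reCLM_apply] at h
  rw [Jb, ← h]
  refine integral_nonpos (fun x => ?_)
  simp [Complex.exp_re, Complex.sub_re, Complex.mul_re, Complex.mul_im, Real.cos_le_one]

end LevyHolderAux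

namespace LevyHolderAux
variable {ν : Measure ℝ}

noncomputable def A (μdrift σ : ℝ) (ω : ℝ) : ℂ :=
  Complex.I * μdrift * ω - (1 / 2 : ℂ) * (σ : ℂ) ^ 2 * (ω : ℂ) ^ 2

lemma A_re (μdrift σ ω : ℝ) : (A μdrift σ ω).re = -(σ ^ 2 * ω ^ 2 / 2) := by
  rw [show A μdrift σ ω = Complex.ofReal (-(σ ^ 2 * ω ^ 2 / 2)) + Complex.ofReal (μdrift * ω)
    * Complex.I by rw [A]; push_cast; ring]
  simp [← Complex.ofReal_pow]

lemma norm_exp_A_le_one (μdrift σ ω : ℝ) : ‖Complex.exp (A μdrift σ ω)‖ ≤ 1 := by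
  rw [Complex.norm_exp, A_re]
  exact Real.exp_le_one_iff.2 (neg_nonpos.2 (by positivity))

lemma norm_exp_Js_le_one (hν : ∫⁻ x : ℝ, ENNReal.ofReal (min 1 (x ^ 2)) ∂ν < ⊤) (ω : ℝ) :
    ‖Complex.exp (Js ν ω)‖ ≤ 1 := by
  rw [Complex.norm_exp, Js_re hν]
  exact Real.exp_le_one_iff.2 (by rw [show (-sfun ν ω) ≤ 0 ↔ 0 ≤ sfun ν ω from neg_nonpos]; exact sfun_nonneg ω)

lemma norm_exp_Jb_le_one (hν : ∫⁻ x : ℝ, ENNReal.ofReal (min 1 (x ^ 2)) ∂ν < ⊤) (ω : ℝ) :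
    ‖Complex.exp (Jb ν ω)‖ ≤ 1 := by
  rw [Complex.norm_exp]
  exact Real.exp_le_one_iff.2 (Jb_re_nonpos hν ω)

lemma E1core {μdrift σ : ℝ} (hσ : 0 ≤ σ) {ω₁ ω₂ : ℝ} (h21 : |ω₂| ≤ |ω₁|)
    (hδ : |ω₁ - ω₂| ≤ 1) :
    ‖Complex.exp (A μdrift σ ω₁) - Complex.exp (A μdrift σ ω₂)‖ ≤
      (|μdrift| + σ + σ ^ 2 / 2) * |ω₁ - ω₂| := by
  have hmvt := exp_norm_sub_le (A μdrift σ ω₁) (A μdrift σ ω₂)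
  have hre : (A μdrift σ ω₁).re ≤ (A μdrift σ ω₂).re := by
    rw [A_re, A_re]
    have : ω₂ ^ 2 ≤ ω₁ ^ 2 := by nlinarith [abs_nonneg ω₂, _root_.sq_abs ω₁, _root_.sq_abs ω₂]
    nlinarith [sq_nonneg σ]
  have hmax : max (Real.exp (A μdrift σ ω₁).re) (Real.exp (A μdrift σ ω₂).re)
      = Real.exp (-(σ ^ 2 * ω₂ ^ 2 / 2)) := by
    rw [max_eq_right (Real.exp_le_exp.2 hre), A_re]
  rw [hmax] at hmvt
  have hA : A μdrift σ ω₁ - A μdrift σ ω₂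
      = ((ω₁ - ω₂ : ℝ) : ℂ) * (Complex.I * μdrift - (1 / 2 : ℂ) * σ ^ 2 * ((ω₁ + ω₂ : ℝ) : ℂ)) := by
    rw [A, A]; push_cast; ring
  have hnA : ‖A μdrift σ ω₁ - A μdrift σ ω₂‖ ≤ |ω₁ - ω₂| * (|μdrift| + σ ^ 2 / 2 * |ω₁ + ω₂|) := by
    rw [hA, norm_mul, Complex.norm_real, Real.norm_eq_abs]
    gcongr
    calc ‖Complex.I * μdrift - (1 / 2 : ℂ) * σ ^ 2 * ((ω₁ + ω₂ : ℝ) : ℂ)‖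
        ≤ ‖Complex.I * (μdrift : ℂ)‖ + ‖(1 / 2 : ℂ) * σ ^ 2 * ((ω₁ + ω₂ : ℝ) : ℂ)‖ :=
          norm_sub_le _ _
      _ ≤ |μdrift| + σ ^ 2 / 2 * |ω₁ + ω₂| := by
          have e1 : ‖Complex.I * (μdrift : ℂ)‖ = |μdrift| := by
            simp [norm_mul, Complex.norm_real]
          have e2 : ‖(1 / 2 : ℂ) * (σ:ℂ) ^ 2 * ((ω₁ + ω₂ : ℝ) : ℂ)‖ = σ ^ 2 / 2 * |ω₁ + ω₂| := by
            rw [show ((1 / 2 : ℂ) * (σ:ℂ) ^ 2 * ((ω₁ + ω₂ : ℝ) : ℂ))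
              = (((σ ^ 2 / 2 * (ω₁ + ω₂) : ℝ)) : ℂ) by push_cast; ring]
            rw [Complex.norm_real, Real.norm_eq_abs, abs_mul,
              _root_.abs_of_nonneg (by positivity : (0:ℝ) ≤ σ ^ 2 / 2)]
          rw [e1, e2]
  have hfinal : |ω₁ - ω₂| * (|μdrift| + σ ^ 2 / 2 * |ω₁ + ω₂|) * Real.exp (-(σ ^ 2 * ω₂ ^ 2 / 2))
      ≤ (|μdrift| + σ + σ ^ 2 / 2) * |ω₁ - ω₂| := by
    have he1 : Real.exp (-(σ ^ 2 * ω₂ ^ 2 / 2)) ≤ 1 := Real.exp_le_one_iff.2 (neg_nonpos.2 (by positivity))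
    have hsum : |ω₁ + ω₂| ≤ 2 * |ω₂| + 1 := by
      have := abs_sub_abs_le_abs_sub ω₁ ω₂
      have h3 := abs_add_le ω₁ ω₂
      calc |ω₁ + ω₂| ≤ |ω₁| + |ω₂| := abs_add_le _ _
        _ ≤ 2 * |ω₂| + 1 := by
            have : |ω₁| ≤ |ω₂| + |ω₁ - ω₂| := by
              calc |ω₁| = |ω₂ + (ω₁ - ω₂)| := by ring_nf
                _ ≤ |ω₂| + |ω₁ - ω₂| := abs_add_le _ _
            linarith
    have hgauss : σ ^ 2 * |ω₂| * Real.exp (-(σ ^ 2 * ω₂ ^ 2 / 2)) ≤ σ := by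
      have := gauss_decay hσ (abs_nonneg ω₂)
      rw [show σ ^ 2 * |ω₂| ^ 2 = σ ^ 2 * ω₂ ^ 2 by rw [_root_.sq_abs]] at this
      exact this
    have hee : 0 ≤ Real.exp (-(σ ^ 2 * ω₂ ^ 2 / 2)) := (Real.exp_pos _).le
    have key : (|μdrift| + σ ^ 2 / 2 * |ω₁ + ω₂|) * Real.exp (-(σ ^ 2 * ω₂ ^ 2 / 2))
        ≤ |μdrift| + σ + σ ^ 2 / 2 := by
      have h5 : σ ^ 2 / 2 * |ω₁ + ω₂| * Real.exp (-(σ ^ 2 * ω₂ ^ 2 / 2))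
          ≤ (σ ^ 2 * |ω₂| + σ ^ 2 / 2) * Real.exp (-(σ ^ 2 * ω₂ ^ 2 / 2)) := by
        have : σ ^ 2 / 2 * |ω₁ + ω₂| ≤ σ ^ 2 * |ω₂| + σ ^ 2 / 2 := by nlinarith [sq_nonneg σ]
        exact mul_le_mul_of_nonneg_right this hee
      have h6 : (σ ^ 2 * |ω₂| + σ ^ 2 / 2) * Real.exp (-(σ ^ 2 * ω₂ ^ 2 / 2)) ≤ σ + σ ^ 2 / 2 := by
        rw [add_mul]
        have h7 : σ ^ 2 / 2 * Real.exp (-(σ ^ 2 * ω₂ ^ 2 / 2)) ≤ σ ^ 2 / 2 := by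
          nlinarith [sq_nonneg σ]
        linarith
      have h8 : |μdrift| * Real.exp (-(σ ^ 2 * ω₂ ^ 2 / 2)) ≤ |μdrift| := by
        nlinarith [abs_nonneg μdrift]
      rw [add_mul]
      linarith
    calc |ω₁ - ω₂| * (|μdrift| + σ ^ 2 / 2 * |ω₁ + ω₂|) * Real.exp (-(σ ^ 2 * ω₂ ^ 2 / 2))
        = |ω₁ - ω₂| * ((|μdrift| + σ ^ 2 / 2 * |ω₁ + ω₂|) * Real.exp (-(σ ^ 2 * ω₂ ^ 2 / 2))) := by
          ring
      _ ≤ |ω₁ - ω₂| * (|μdrift| + σ + σ ^ 2 / 2) :=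
          mul_le_mul_of_nonneg_left key (abs_nonneg _)
      _ = (|μdrift| + σ + σ ^ 2 / 2) * |ω₁ - ω₂| := by ring
  calc ‖Complex.exp (A μdrift σ ω₁) - Complex.exp (A μdrift σ ω₂)‖
      ≤ ‖A μdrift σ ω₁ - A μdrift σ ω₂‖ * Real.exp (-(σ ^ 2 * ω₂ ^ 2 / 2)) := hmvt
    _ ≤ |ω₁ - ω₂| * (|μdrift| + σ ^ 2 / 2 * |ω₁ + ω₂|) * Real.exp (-(σ ^ 2 * ω₂ ^ 2 / 2)) := by
        exact mul_le_mul_of_nonneg_right hnA (Real.exp_pos _).le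
    _ ≤ (|μdrift| + σ + σ ^ 2 / 2) * |ω₁ - ω₂| := hfinal

end LevyHolderAux

namespace LevyHolderAux
variable {ν : Measure ℝ}

lemma E2core (hg2 : Integrable (fun x : ℝ => min 1 (x ^ 2)) ν) {ω₁ ω₂ : ℝ}
    (hδ : |ω₁ - ω₂| ≤ 1) :
    ‖Js ν ω₁ - Js ν ω₂‖ ≤ (sfun ν ω₂ + 2 * c2 ν) * |ω₁ - ω₂| := by
  set δ := ω₁ - ω₂ with hδdef
  have hsub : Js ν ω₁ - Js ν ω₂ = ∫ x in S,
      ((Complex.exp (Complex.I * ω₁ * x) - 1 - Complex.I * ω₁ * x) -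
        (Complex.exp (Complex.I * ω₂ * x) - 1 - Complex.I * ω₂ * x)) ∂ν := by
    rw [Js, Js, integral_sub (integrable_Js_integrand hg2 ω₁) (integrable_Js_integrand hg2 ω₂)]
  rw [hsub]
  have hpt : ∀ x : ℝ, ‖(Complex.exp (Complex.I * ω₁ * x) - 1 - Complex.I * ω₁ * x) -
        (Complex.exp (Complex.I * ω₂ * x) - 1 - Complex.I * ω₂ * x)‖
      ≤ |δ| * ((1 - Real.cos (ω₂ * x)) + 2 * x ^ 2) := by
    intro x
    have hid : (Complex.exp (Complex.I * ω₁ * x) - 1 - Complex.I * ω₁ * x) -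
        (Complex.exp (Complex.I * ω₂ * x) - 1 - Complex.I * ω₂ * x)
        = (Complex.exp (Complex.I * ((ω₂ * x : ℝ) : ℂ)) - 1) *
            (Complex.exp (Complex.I * ((δ * x : ℝ) : ℂ)) - 1) +
          (Complex.exp (Complex.I * ((δ * x : ℝ) : ℂ)) - 1 - Complex.I * ((δ * x : ℝ) : ℂ)) := by
      have he : Complex.exp (Complex.I * ω₁ * x)
          = Complex.exp (Complex.I * ((ω₂ * x : ℝ) : ℂ)) *
            Complex.exp (Complex.I * ((δ * x : ℝ) : ℂ)) := by
        rw [← Complex.exp_add]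
        congr 1
        push_cast [hδdef]
        ring
      rw [he]
      push_cast [hδdef]
      ring
    rw [hid]
    have h1 : ‖(Complex.exp (Complex.I * ((ω₂ * x : ℝ) : ℂ)) - 1) *
        (Complex.exp (Complex.I * ((δ * x : ℝ) : ℂ)) - 1)‖
        ≤ ((1 - Real.cos (ω₂ * x)) + x ^ 2 / 2) * |δ| := by
      rw [norm_mul]
      set u := ‖Complex.exp (Complex.I * ((ω₂ * x : ℝ) : ℂ)) - 1‖ with hu
      have hu2 : u ^ 2 = 2 * (1 - Real.cos (ω₂ * x)) := sq_norm_exp_I_mul_sub_one (ω₂ * x)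
      have h2 : ‖Complex.exp (Complex.I * ((δ * x : ℝ) : ℂ)) - 1‖ ≤ |δ| * |x| := by
        refine (norm_exp_I_mul_sub_one_le (δ * x)).trans ?_
        rw [abs_mul]
      have hun : 0 ≤ u := norm_nonneg _
      calc u * ‖Complex.exp (Complex.I * ((δ * x : ℝ) : ℂ)) - 1‖ ≤ u * (|δ| * |x|) := by
            exact mul_le_mul_of_nonneg_left h2 hun
        _ = (u * |x|) * |δ| := by ring
        _ ≤ ((1 - Real.cos (ω₂ * x)) + x ^ 2 / 2) * |δ| := by
            have : u * |x| ≤ (1 - Real.cos (ω₂ * x)) + x ^ 2 / 2 := by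
              nlinarith [sq_nonneg (u - |x|), _root_.sq_abs x]
            exact mul_le_mul_of_nonneg_right this (abs_nonneg δ)
    have h3 : ‖Complex.exp (Complex.I * ((δ * x : ℝ) : ℂ)) - 1 - Complex.I * ((δ * x : ℝ) : ℂ)‖
        ≤ (δ * x) ^ 2 := norm_exp_I_mul_sub_one_sub_le (δ * x)
    have h4 : (δ * x) ^ 2 ≤ |δ| * x ^ 2 := by
      have : δ ^ 2 ≤ |δ| := by nlinarith [_root_.sq_abs δ, abs_nonneg δ]
      calc (δ * x) ^ 2 = δ ^ 2 * x ^ 2 := by ring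
        _ ≤ |δ| * x ^ 2 := mul_le_mul_of_nonneg_right this (sq_nonneg x)
    calc ‖_ + _‖ ≤ ((1 - Real.cos (ω₂ * x)) + x ^ 2 / 2) * |δ| + |δ| * x ^ 2 :=
          (norm_add_le _ _).trans (add_le_add h1 (h3.trans h4))
      _ ≤ |δ| * ((1 - Real.cos (ω₂ * x)) + 2 * x ^ 2) := by nlinarith [abs_nonneg δ, sq_nonneg x]
  have hbound := norm_integral_le_of_norm_le
    (((integrable_one_sub_cos hg2 ω₂).add ((integrable_sq hg2).const_mul 2)).const_mul |δ|)
    (ae_of_all _ hpt)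
  refine hbound.trans ?_
  simp only [Pi.add_apply] at *
  rw [integral_const_mul, integral_add (integrable_one_sub_cos hg2 ω₂)
    ((integrable_sq hg2).const_mul 2), integral_const_mul]
  rw [show (∫ x in S, (1 - Real.cos (ω₂ * x)) ∂ν) = sfun ν ω₂ from rfl,
    show (∫ x in S, x ^ 2 ∂ν) = c2 ν from rfl]
  rw [mul_comm]

lemma E2 (hν : ∫⁻ x : ℝ, ENNReal.ofReal (min 1 (x ^ 2)) ∂ν < ⊤) {ω₁ ω₂ : ℝ}
    (hs : sfun ν ω₂ ≤ sfun ν ω₁) (hδ : |ω₁ - ω₂| ≤ 1) :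
    ‖Complex.exp (Js ν ω₁) - Complex.exp (Js ν ω₂)‖ ≤ (1 + 2 * c2 ν) * |ω₁ - ω₂| := by
  have hg2 := integrable_min_sq hν
  have hmvt := exp_norm_sub_le (Js ν ω₁) (Js ν ω₂)
  have hre1 : (Js ν ω₁).re = -sfun ν ω₁ := Js_re hν ω₁
  have hre2 : (Js ν ω₂).re = -sfun ν ω₂ := Js_re hν ω₂
  have hmax : max (Real.exp (Js ν ω₁).re) (Real.exp (Js ν ω₂).re)
      = Real.exp (-sfun ν ω₂) := by
    rw [hre1, hre2, max_eq_right (Real.exp_le_exp.2 (by linarith))]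
  rw [hmax] at hmvt
  refine hmvt.trans ?_
  have hcore := E2core hg2 hδ
  have hepos : (0:ℝ) ≤ Real.exp (-sfun ν ω₂) := (Real.exp_pos _).le
  calc ‖Js ν ω₁ - Js ν ω₂‖ * Real.exp (-sfun ν ω₂)
      ≤ ((sfun ν ω₂ + 2 * c2 ν) * |ω₁ - ω₂|) * Real.exp (-sfun ν ω₂) :=
        mul_le_mul_of_nonneg_right hcore hepos
    _ = (sfun ν ω₂ * Real.exp (-sfun ν ω₂) + 2 * c2 ν * Real.exp (-sfun ν ω₂)) * |ω₁ - ω₂| := by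
        ring
    _ ≤ (1 + 2 * c2 ν) * |ω₁ - ω₂| := by
        have hb1 : sfun ν ω₂ * Real.exp (-sfun ν ω₂) ≤ 1 :=
          self_mul_exp_neg_le_one (sfun_nonneg ω₂)
        have hb2 : 2 * c2 ν * Real.exp (-sfun ν ω₂) ≤ 2 * c2 ν := by
          nlinarith [Real.exp_le_one_iff.2 (neg_nonpos.2 (sfun_nonneg (ν := ν) ω₂)),
            c2_nonneg (ν := ν)]
        have := abs_nonneg (ω₁ - ω₂)
        nlinarith

end LevyHolderAux

namespace LevyHolderAux
variable {ν : Measure ℝ}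

lemma compl_S_eq : Sᶜ = {x : ℝ | 1 < |x|} := by
  ext x
  simp only [S, Set.mem_compl_iff, Set.mem_Icc, not_and_or, not_le, Set.mem_setOf_eq, lt_abs]
  constructor
  · rintro (h | h)
    · right; linarith
    · left; exact h
  · rintro (h | h)
    · right; exact h
    · left; linarith

lemma integrable_rpow {ε : ℝ} (hε0 : 0 < ε)
    (hint : ∫⁻ x : ℝ in {x : ℝ | 1 < |x|}, ENNReal.ofReal (|x| ^ ε) ∂ν < ⊤) :
    Integrable (fun x : ℝ => |x| ^ ε) (ν.restrict Sᶜ) := by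
  rw [compl_S_eq]
  refine ⟨(_root_.continuous_abs.rpow_const fun x => Or.inr hε0.le).aestronglyMeasurable, ?_⟩
  rw [hasFiniteIntegral_iff_ofReal (ae_of_all _ fun x => Real.rpow_nonneg (abs_nonneg x) ε)]
  exact hint

noncomputable def K (ν : Measure ℝ) (ε : ℝ) : ℝ := ∫ x in Sᶜ, |x| ^ ε ∂ν

lemma K_nonneg (ε : ℝ) : 0 ≤ K ν ε :=
  integral_nonneg fun x => Real.rpow_nonneg (abs_nonneg x) ε

lemma E3 (hν : ∫⁻ x : ℝ, ENNReal.ofReal (min 1 (x ^ 2)) ∂ν < ⊤) {ε : ℝ}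
    (hε0 : 0 < ε) (hε1 : ε ≤ 1)
    (hint : ∫⁻ x : ℝ in {x : ℝ | 1 < |x|}, ENNReal.ofReal (|x| ^ ε) ∂ν < ⊤)
    (ω₁ ω₂ : ℝ) :
    ‖Jb ν ω₁ - Jb ν ω₂‖ ≤ 2 * K ν ε * |ω₁ - ω₂| ^ ε := by
  have hK := integrable_rpow hε0 hint
  have hsub : Jb ν ω₁ - Jb ν ω₂ = ∫ x in Sᶜ,
      ((Complex.exp (Complex.I * ω₁ * x) - 1) - (Complex.exp (Complex.I * ω₂ * x) - 1)) ∂ν := by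
    rw [Jb, Jb, integral_sub (integrable_Jb_integrand hν ω₁) (integrable_Jb_integrand hν ω₂)]
  rw [hsub]
  have hpt : ∀ x : ℝ, ‖(Complex.exp (Complex.I * ω₁ * x) - 1) -
      (Complex.exp (Complex.I * ω₂ * x) - 1)‖ ≤ 2 * |ω₁ - ω₂| ^ ε * |x| ^ ε := by
    intro x
    have h0 : (Complex.exp (Complex.I * ω₁ * x) - 1) - (Complex.exp (Complex.I * ω₂ * x) - 1)
        = Complex.exp (Complex.I * ω₁ * x) - Complex.exp (Complex.I * ω₂ * x) := by ring
    rw [h0, exp_I_mul_sub_exp_I_mul]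
    have hb1 := norm_exp_I_mul_sub_one_le ((ω₁ - ω₂) * x)
    have hb2 := norm_exp_I_mul_sub_one_le_two ((ω₁ - ω₂) * x)
    have hmin : ‖Complex.exp (Complex.I * (((ω₁ - ω₂) * x : ℝ) : ℂ)) - 1‖
        ≤ min 2 (|ω₁ - ω₂| * |x|) := by
      refine le_min hb2 ?_
      rw [← abs_mul]
      exact hb1
    rw [show ((ω₁:ℂ) - ω₂) * x = (((ω₁ - ω₂) * x : ℝ) : ℂ) by push_cast; ring]
    refine hmin.trans ?_
    have h5 := min_two_le_rpow (mul_nonneg (abs_nonneg (ω₁ - ω₂)) (abs_nonneg x)) hε0 hε1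
    refine h5.trans (le_of_eq ?_)
    rw [Real.mul_rpow (abs_nonneg _) (abs_nonneg _)]
    ring
  have hbound := norm_integral_le_of_norm_le ((hK.const_mul (2 * |ω₁ - ω₂| ^ ε)))
    (ae_of_all _ hpt)
  refine hbound.trans (le_of_eq ?_)
  rw [integral_const_mul]
  rw [show (∫ x in Sᶜ, |x| ^ ε ∂ν) = K ν ε from rfl]
  ring

end LevyHolderAux

namespace LevyHolderAux
variable {ν : Measure ℝ}

lemma telescope {a₁ a₂ b₁ b₂ c₁ c₂ : ℂ} (ha₂ : ‖a₂‖ ≤ 1) (hb₁ : ‖b₁‖ ≤ 1) (hb₂ : ‖b₂‖ ≤ 1)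
    (hc₁ : ‖c₁‖ ≤ 1) :
    ‖a₁ * b₁ * c₁ - a₂ * b₂ * c₂‖ ≤ ‖a₁ - a₂‖ + ‖b₁ - b₂‖ + ‖c₁ - c₂‖ := by
  have hid : a₁ * b₁ * c₁ - a₂ * b₂ * c₂
      = (a₁ - a₂) * b₁ * c₁ + a₂ * (b₁ - b₂) * c₁ + a₂ * b₂ * (c₁ - c₂) := by ring
  rw [hid]
  have h1 : ‖(a₁ - a₂) * b₁ * c₁‖ ≤ ‖a₁ - a₂‖ := by
    rw [norm_mul, norm_mul]
    calc ‖a₁ - a₂‖ * ‖b₁‖ * ‖c₁‖ ≤ ‖a₁ - a₂‖ * 1 * 1 := by gcongr <;> positivity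
      _ = ‖a₁ - a₂‖ := by ring
  have h2 : ‖a₂ * (b₁ - b₂) * c₁‖ ≤ ‖b₁ - b₂‖ := by
    rw [norm_mul, norm_mul]
    calc ‖a₂‖ * ‖b₁ - b₂‖ * ‖c₁‖ ≤ 1 * ‖b₁ - b₂‖ * 1 := by gcongr <;> positivity
      _ = ‖b₁ - b₂‖ := by ring
  have h3 : ‖a₂ * b₂ * (c₁ - c₂)‖ ≤ ‖c₁ - c₂‖ := by
    rw [norm_mul, norm_mul]
    calc ‖a₂‖ * ‖b₂‖ * ‖c₁ - c₂‖ ≤ 1 * 1 * ‖c₁ - c₂‖ := by gcongr <;> positivity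
      _ = ‖c₁ - c₂‖ := by ring
  calc ‖_ + _ + _‖ ≤ ‖(a₁ - a₂) * b₁ * c₁ + a₂ * (b₁ - b₂) * c₁‖ + ‖a₂ * b₂ * (c₁ - c₂)‖ :=
        norm_add_le _ _
    _ ≤ ‖(a₁ - a₂) * b₁ * c₁‖ + ‖a₂ * (b₁ - b₂) * c₁‖ + ‖a₂ * b₂ * (c₁ - c₂)‖ := by
        have := norm_add_le ((a₁ - a₂) * b₁ * c₁) (a₂ * (b₁ - b₂) * c₁)
        linarith
    _ ≤ ‖a₁ - a₂‖ + ‖b₁ - b₂‖ + ‖c₁ - c₂‖ := by linarith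

lemma exp_levy_eq {μdrift σ : ℝ} (hν : ∫⁻ x : ℝ, ENNReal.ofReal (min 1 (x ^ 2)) ∂ν < ⊤)
    (ω : ℝ) :
    Complex.exp (levyExponent μdrift σ ν ω)
      = Complex.exp (A μdrift σ ω) * Complex.exp (Js ν ω) * Complex.exp (Jb ν ω) := by
  rw [levy_split μdrift σ hν ω, Complex.exp_add, Complex.exp_add]
  rfl

lemma abs_le_rpow {t ε : ℝ} (ht0 : 0 ≤ t) (ht1 : t ≤ 1) (hε0 : 0 < ε) (hε1 : ε ≤ 1) :
    t ≤ t ^ ε := by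
  rcases eq_or_lt_of_le ht0 with h | h
  · rw [← h, Real.zero_rpow hε0.ne']
  · have := Real.rpow_le_rpow_of_exponent_ge h ht1 hε1
    rwa [Real.rpow_one] at this

lemma EPhi {μdrift σ : ℝ} (hσ : 0 ≤ σ) (hν : ∫⁻ x : ℝ, ENNReal.ofReal (min 1 (x ^ 2)) ∂ν < ⊤)
    {ε : ℝ} (hε0 : 0 < ε) (hε1 : ε ≤ 1)
    (hint : ∫⁻ x : ℝ in {x : ℝ | 1 < |x|}, ENNReal.ofReal (|x| ^ ε) ∂ν < ⊤)
    (ω₁ ω₂ : ℝ) :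
    ‖Complex.exp (levyExponent μdrift σ ν ω₁) - Complex.exp (levyExponent μdrift σ ν ω₂)‖
      ≤ (|μdrift| + σ + σ ^ 2 / 2 + 1 + 2 * c2 ν + 2 * K ν ε + 2) * |ω₁ - ω₂| ^ ε := by
  have hg2 := integrable_min_sq hν
  set Cφ := |μdrift| + σ + σ ^ 2 / 2 + 1 + 2 * c2 ν + 2 * K ν ε + 2 with hCφ
  have hrpow0 : (0:ℝ) ≤ |ω₁ - ω₂| ^ ε := Real.rpow_nonneg (abs_nonneg _) ε
  have hc2 := c2_nonneg (ν := ν)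
  have hKn := K_nonneg (ν := ν) ε
  rcases le_total (|ω₁ - ω₂|) 1 with hδ | hδ
  · -- small increment
    rw [exp_levy_eq hν ω₁, exp_levy_eq hν ω₂]
    have htel := telescope (a₁ := Complex.exp (A μdrift σ ω₁)) (a₂ := Complex.exp (A μdrift σ ω₂))
      (b₁ := Complex.exp (Js ν ω₁)) (b₂ := Complex.exp (Js ν ω₂))
      (c₁ := Complex.exp (Jb ν ω₁)) (c₂ := Complex.exp (Jb ν ω₂))
      (norm_exp_A_le_one _ _ _) (norm_exp_Js_le_one hν _) (norm_exp_Js_le_one hν _)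
      (norm_exp_Jb_le_one hν _)
    refine htel.trans ?_
    have hE1 : ‖Complex.exp (A μdrift σ ω₁) - Complex.exp (A μdrift σ ω₂)‖
        ≤ (|μdrift| + σ + σ ^ 2 / 2) * |ω₁ - ω₂| := by
      rcases le_total (|ω₂|) (|ω₁|) with h | h
      · exact E1core hσ h hδ
      · rw [norm_sub_rev]
        have := E1core (μdrift := μdrift) hσ (ω₁ := ω₂) (ω₂ := ω₁) h (by rwa [abs_sub_comm])
        rwa [abs_sub_comm ω₂ ω₁] at this
    have hE2 : ‖Complex.exp (Js ν ω₁) - Complex.exp (Js ν ω₂)‖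
        ≤ (1 + 2 * c2 ν) * |ω₁ - ω₂| := by
      rcases le_total (sfun ν ω₂) (sfun ν ω₁) with h | h
      · exact E2 hν h hδ
      · rw [norm_sub_rev]
        have := E2 hν (ω₁ := ω₂) (ω₂ := ω₁) h (by rwa [abs_sub_comm])
        rwa [abs_sub_comm ω₂ ω₁] at this
    have hE3 : ‖Complex.exp (Jb ν ω₁) - Complex.exp (Jb ν ω₂)‖
        ≤ 2 * K ν ε * |ω₁ - ω₂| ^ ε := by
      have hmvt := exp_norm_sub_le (Jb ν ω₁) (Jb ν ω₂)
      have hmax : max (Real.exp (Jb ν ω₁).re) (Real.exp (Jb ν ω₂).re) ≤ 1 :=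
        max_le (Real.exp_le_one_iff.2 (Jb_re_nonpos hν ω₁))
          (Real.exp_le_one_iff.2 (Jb_re_nonpos hν ω₂))
      have h4 := E3 hν hε0 hε1 hint ω₁ ω₂
      calc ‖Complex.exp (Jb ν ω₁) - Complex.exp (Jb ν ω₂)‖
          ≤ ‖Jb ν ω₁ - Jb ν ω₂‖ * max (Real.exp (Jb ν ω₁).re) (Real.exp (Jb ν ω₂).re) := hmvt
        _ ≤ ‖Jb ν ω₁ - Jb ν ω₂‖ * 1 := mul_le_mul_of_nonneg_left hmax (norm_nonneg _)
        _ = ‖Jb ν ω₁ - Jb ν ω₂‖ := mul_one _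
        _ ≤ 2 * K ν ε * |ω₁ - ω₂| ^ ε := h4
    have hle : |ω₁ - ω₂| ≤ |ω₁ - ω₂| ^ ε := abs_le_rpow (abs_nonneg _) hδ hε0 hε1
    have habs := abs_nonneg (ω₁ - ω₂)
    calc ‖Complex.exp (A μdrift σ ω₁) - Complex.exp (A μdrift σ ω₂)‖ +
          ‖Complex.exp (Js ν ω₁) - Complex.exp (Js ν ω₂)‖ +
          ‖Complex.exp (Jb ν ω₁) - Complex.exp (Jb ν ω₂)‖
        ≤ (|μdrift| + σ + σ ^ 2 / 2) * |ω₁ - ω₂| + (1 + 2 * c2 ν) * |ω₁ - ω₂|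
            + 2 * K ν ε * |ω₁ - ω₂| ^ ε := by linarith
      _ ≤ Cφ * |ω₁ - ω₂| ^ ε := by
          rw [hCφ]
          have hμ := abs_nonneg μdrift
          nlinarith [mul_le_mul_of_nonneg_left hle
              (by positivity : (0:ℝ) ≤ |μdrift| + σ + σ ^ 2 / 2),
            mul_le_mul_of_nonneg_left hle (by positivity : (0:ℝ) ≤ 1 + 2 * c2 ν)]
  · -- large increment
    have h2 : ‖Complex.exp (levyExponent μdrift σ ν ω₁)
        - Complex.exp (levyExponent μdrift σ ν ω₂)‖ ≤ 2 := by
      have hn : ∀ ω : ℝ, ‖Complex.exp (levyExponent μdrift σ ν ω)‖ ≤ 1 := by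
        intro ω
        rw [exp_levy_eq hν ω, norm_mul, norm_mul]
        have := norm_exp_A_le_one μdrift σ ω
        have := norm_exp_Js_le_one hν ω
        have := norm_exp_Jb_le_one hν ω
        calc ‖Complex.exp (A μdrift σ ω)‖ * ‖Complex.exp (Js ν ω)‖ * ‖Complex.exp (Jb ν ω)‖
            ≤ 1 * 1 * 1 := by gcongr <;> positivity
          _ = 1 := by ring
      calc ‖_ - _‖ ≤ ‖Complex.exp (levyExponent μdrift σ ν ω₁)‖
            + ‖Complex.exp (levyExponent μdrift σ ν ω₂)‖ := norm_sub_le _ _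
        _ ≤ 2 := by linarith [hn ω₁, hn ω₂]
    have hone : (1:ℝ) ≤ |ω₁ - ω₂| ^ ε := Real.one_le_rpow hδ hε0.le
    have hμ := abs_nonneg μdrift
    calc ‖_ - _‖ ≤ 2 := h2
      _ ≤ Cφ * |ω₁ - ω₂| ^ ε := by
          rw [hCφ]
          nlinarith

end LevyHolderAux

/-- If moreover `∫_{|x|>1} |x|^ε ν(dx) < ∞` for some `ε ∈ (0, 1)`, then for
every `q ∈ (0, 1)` the function `h(ω) = (1 − q)/(1 − q e^{ψ(ω)})` satisfies a
global Hölder condition on `ℝ`. -/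
theorem levyExponent_geometric_char_fn_holder
    (μdrift σ : ℝ) (hσ : 0 ≤ σ) (ν : Measure ℝ)
    (hν0 : ν {0} = 0)
    (hν : ∫⁻ x : ℝ, ENNReal.ofReal (min 1 (x ^ 2)) ∂ν < ⊤)
    (hνε : ∃ ε ∈ Set.Ioo (0 : ℝ) 1,
      ∫⁻ x : ℝ in {x : ℝ | 1 < |x|}, ENNReal.ofReal (|x| ^ ε) ∂ν < ⊤)
    (q : ℝ) (hq : q ∈ Set.Ioo (0 : ℝ) 1) :
    ∃ C > (0 : ℝ), ∃ γ ∈ Set.Ioc (0 : ℝ) 1, ∀ ω₁ ω₂ : ℝ,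
      ‖((1 : ℂ) - q) / (1 - (q : ℂ) * Complex.exp (levyExponent μdrift σ ν ω₁)) -
        ((1 : ℂ) - q) / (1 - (q : ℂ) * Complex.exp (levyExponent μdrift σ ν ω₂))‖ ≤
        C * |ω₁ - ω₂| ^ γ := by
  classical
  obtain ⟨ε, ⟨hε0, hε1⟩, hint⟩ := hνε
  obtain ⟨hq0, hq1⟩ := hq
  set Cφ := |μdrift| + σ + σ ^ 2 / 2 + 1 + 2 * LevyHolderAux.c2 ν + 2 * LevyHolderAux.K ν ε + 2
    with hCφ
  have hCφpos : 0 < Cφ := by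
    have := LevyHolderAux.c2_nonneg (ν := ν)
    have := LevyHolderAux.K_nonneg (ν := ν) ε
    have := abs_nonneg μdrift
    rw [hCφ]; nlinarith [sq_nonneg σ]
  have h1q : (0:ℝ) < 1 - q := by linarith
  refine ⟨q * Cφ / (1 - q), by positivity, ε, ⟨hε0, hε1.le⟩, fun ω₁ ω₂ => ?_⟩
  set Φ₁ := Complex.exp (levyExponent μdrift σ ν ω₁) with hΦ₁
  set Φ₂ := Complex.exp (levyExponent μdrift σ ν ω₂) with hΦ₂
  have hΦ := LevyHolderAux.EPhi (μdrift := μdrift) hσ hν hε0 hε1.le hint ω₁ ω₂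
  have hΦnorm : ∀ ω : ℝ, ‖Complex.exp (levyExponent μdrift σ ν ω)‖ ≤ 1 := by
    intro ω
    rw [LevyHolderAux.exp_levy_eq hν ω, norm_mul, norm_mul]
    calc ‖Complex.exp (LevyHolderAux.A μdrift σ ω)‖ * ‖Complex.exp (LevyHolderAux.Js ν ω)‖ *
          ‖Complex.exp (LevyHolderAux.Jb ν ω)‖
        ≤ 1 * 1 * 1 := by
          have h1 := LevyHolderAux.norm_exp_A_le_one μdrift σ ω
          have h2 := LevyHolderAux.norm_exp_Js_le_one hν ω
          have h3 := LevyHolderAux.norm_exp_Jb_le_one hν ω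
          gcongr <;> positivity
      _ = 1 := by ring
  set d₁ : ℂ := 1 - (q : ℂ) * Φ₁ with hd₁
  set d₂ : ℂ := 1 - (q : ℂ) * Φ₂ with hd₂
  have hdlow : ∀ (d : ℂ) (Φ : ℂ), ‖Φ‖ ≤ 1 → d = 1 - (q : ℂ) * Φ → 1 - q ≤ ‖d‖ := by
    intro d Φ hΦn hd
    have h1 : ‖(q : ℂ) * Φ‖ ≤ q := by
      rw [norm_mul, Complex.norm_real, Real.norm_eq_abs, _root_.abs_of_nonneg hq0.le]
      nlinarith [norm_nonneg Φ]
    have h2 := norm_sub_norm_le (1 : ℂ) ((q : ℂ) * Φ)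
    rw [← hd, norm_one] at h2
    linarith
  have hd₁low : 1 - q ≤ ‖d₁‖ := hdlow d₁ Φ₁ (hΦnorm ω₁) hd₁
  have hd₂low : 1 - q ≤ ‖d₂‖ := hdlow d₂ Φ₂ (hΦnorm ω₂) hd₂
  have hq1' : (0:ℝ) < 1 - q := by linarith
  have hd₁ne : d₁ ≠ 0 := by
    intro h
    rw [h, norm_zero] at hd₁low
    linarith
  have hd₂ne : d₂ ≠ 0 := by
    intro h
    rw [h, norm_zero] at hd₂low
    linarith
  have hiden : ((1 : ℂ) - q) / d₁ - ((1 : ℂ) - q) / d₂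
      = ((1 : ℂ) - q) * q * (Φ₁ - Φ₂) / (d₁ * d₂) := by
    field_simp
    rw [hd₁, hd₂]
    ring
  rw [hiden]
  rw [norm_div, norm_mul, norm_mul]
  have hnq : ‖((1 : ℂ) - q)‖ = 1 - q := by
    rw [show ((1 : ℂ) - q) = (((1 - q : ℝ)) : ℂ) by push_cast; ring, Complex.norm_real,
      Real.norm_eq_abs, _root_.abs_of_nonneg hq1'.le]
  have hnq2 : ‖(q : ℂ)‖ = q := by
    rw [Complex.norm_real, Real.norm_eq_abs, _root_.abs_of_nonneg hq0.le]
  rw [hnq, hnq2, norm_mul]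
  have hdenlow : (1 - q) * (1 - q) ≤ ‖d₁‖ * ‖d₂‖ := by
    have := mul_le_mul hd₁low hd₂low hq1'.le (norm_nonneg d₁)
    linarith
  have hdenpos : 0 < ‖d₁‖ * ‖d₂‖ := lt_of_lt_of_le (by positivity) hdenlow
  have hnum : (1 - q) * q * ‖Φ₁ - Φ₂‖ ≤ (1 - q) * q * (Cφ * |ω₁ - ω₂| ^ ε) :=
    mul_le_mul_of_nonneg_left hΦ (by positivity : (0:ℝ) ≤ (1 - q) * q)
  calc (1 - q) * q * ‖Φ₁ - Φ₂‖ / (‖d₁‖ * ‖d₂‖)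
      ≤ (1 - q) * q * (Cφ * |ω₁ - ω₂| ^ ε) / ((1 - q) * (1 - q)) := by
        apply div_le_div₀ (by positivity) hnum (by positivity) hdenlow
    _ = q * Cφ / (1 - q) * |ω₁ - ω₂| ^ ε := by
        field_simp
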